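/- Let a₁₀, a₀₁ ∈ ℝ. If the polynomial a₁₀·P + a₀₁·Q ∈ ℝ[x,y] has total degree at most 2, then a₁₀ = 0. (Consequently, any exponential factor of the system of the form exp(a₀₀ + a₁₀x + a₀₁y), whose cofactor must be a polynomial of degree at most 2, satisfies a₁₀ = 0.) -/
import Mathlib


open MvPolynomial

/-- If `a₁₀·P + a₀₁·Q` has total degree at most `2`, where
`P = x(C+x)(1−x−Ay)` and `Q = B·y·(C+x−y)`, then `a₁₀ = 0`.
(Hence any exponential factor `exp(a₀₀ + a₁₀x + a₀₁y)`, whose cofactor has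
degree at most `2`, satisfies `a₁₀ = 0`.) -/
theorem stmt_3 (A B C : ℝ) (hA : 0 < A) (hB : 0 < B) (hC : 0 < C)
    (a₁₀ a₀₁ : ℝ) :
    let x : MvPolynomial (Fin 2) ℝ := X 0
    let y : MvPolynomial (Fin 2) ℝ := X 1
    let P : MvPolynomial (Fin 2) ℝ := x * (MvPolynomial.C C + x) * (1 - x - MvPolynomial.C A * y)
    let Q : MvPolynomial (Fin 2) ℝ := MvPolynomial.C B * y * (MvPolynomial.C C + x - y)
    (MvPolynomial.C a₁₀ * P + MvPolynomial.C a₀₁ * Q).totalDegree ≤ 2 → a₁₀ = 0 := by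
  intro x y P Q h
  simp only [x, y, P, Q] at h
  by_contra ha
  set p := (MvPolynomial.C a₁₀ * (X 0 * (MvPolynomial.C C + X 0) * (1 - X 0 - MvPolynomial.C A * X 1)) + MvPolynomial.C a₀₁ * (MvPolynomial.C B * X 1 * (MvPolynomial.C C + X 0 - X 1)) : MvPolynomial (Fin 2) ℝ) with hp
  set m : Fin 2 →₀ ℕ := Finsupp.single 0 3 with hm
  have hc : coeff m p = -a₁₀ := by
    have hrw : p = MvPolynomial.C (-a₁₀) * X 0 ^ 3
        + MvPolynomial.C (-a₁₀*A) * (X 0 ^ 2 * X 1)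
        + MvPolynomial.C (a₁₀ - a₁₀*C) * X 0 ^ 2
        + MvPolynomial.C (-a₁₀*A*C + a₀₁*B) * (X 0 * X 1)
        + MvPolynomial.C (-a₀₁*B) * X 1 ^ 2
        + MvPolynomial.C (a₁₀*C) * X 0
        + MvPolynomial.C (a₀₁*B*C) * X 1 := by
      rw [hp]; ring_nf
      simp [C_mul, C_neg]
      ring
    have hsup : (1 : Fin 2) ∉ m.support := by
      simp [hm, Finsupp.single_apply]
    have t1 : coeff m (MvPolynomial.C (-a₁₀) * X 0 ^ 3 : MvPolynomial (Fin 2) ℝ) = -a₁₀ := by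
      simp [coeff_C_mul, coeff_X_pow, hm, sub_mul, add_mul, neg_mul, coeff_sub, coeff_add, coeff_neg, mul_assoc, Finsupp.single_eq_single_iff]
    have t2 : coeff m (MvPolynomial.C (-a₁₀*A) * (X 0 ^ 2 * X 1) : MvPolynomial (Fin 2) ℝ) = 0 := by
      rw [coeff_C_mul, coeff_mul_X', if_neg hsup, mul_zero]
    have t3 : coeff m (MvPolynomial.C (a₁₀ - a₁₀*C) * X 0 ^ 2 : MvPolynomial (Fin 2) ℝ) = 0 := by
      simp [coeff_C_mul, coeff_X_pow, hm, sub_mul, add_mul, neg_mul, coeff_sub, coeff_add, coeff_neg, mul_assoc, Finsupp.single_eq_single_iff]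
    have t4 : coeff m (MvPolynomial.C (-a₁₀*A*C + a₀₁*B) * (X 0 * X 1) : MvPolynomial (Fin 2) ℝ) = 0 := by
      rw [coeff_C_mul, coeff_mul_X', if_neg hsup, mul_zero]
    have t5 : coeff m (MvPolynomial.C (-a₀₁*B) * X 1 ^ 2 : MvPolynomial (Fin 2) ℝ) = 0 := by
      simp [coeff_C_mul, coeff_X_pow, hm, sub_mul, add_mul, neg_mul, coeff_sub, coeff_add, coeff_neg, mul_assoc, Finsupp.single_eq_single_iff]
    have t6 : coeff m (MvPolynomial.C (a₁₀*C) * X 0 : MvPolynomial (Fin 2) ℝ) = 0 := by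
      simp [coeff_C_mul, coeff_X', hm, sub_mul, add_mul, neg_mul, coeff_sub, coeff_add, coeff_neg, mul_assoc, Finsupp.single_eq_single_iff]
    have t7 : coeff m (MvPolynomial.C (a₀₁*B*C) * X 1 : MvPolynomial (Fin 2) ℝ) = 0 := by
      simp [coeff_C_mul, coeff_X', hm, sub_mul, add_mul, neg_mul, coeff_sub, coeff_add, coeff_neg, mul_assoc, Finsupp.single_eq_single_iff]
    rw [hrw]
    simp only [coeff_add, t1, t2, t3, t4, t5, t6, t7]
    ring
  have hmem : m ∈ p.support := by
    rw [MvPolynomial.mem_support_iff, hc]; simpa using ha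
  have hle := MvPolynomial.le_totalDegree hmem
  have h3 : m.sum (fun _ e => e) = 3 := by
    simp [hm, Finsupp.sum_single_index]
  omega
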